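/- For all n ≥ 1, B_n = 2·A_n + n, where A_n is the position of the n-th occurrence of the letter 1 in k and B_n is the position of the n-th occurrence of the letter 0 in k (positions indexed from 1). -/

import Mathlib

/-- The substitution `h` with `h(1) = 110` and `h(0) = 11`. -/
def hsub : ℕ → List ℕ
  | 0 => [1, 1]
  | 1 => [1, 1, 0]
  | _ => []

/-- `h` extended to words by concatenation. -/
def happ (w : List ℕ) : List ℕ := w.flatMap hsub

/-- `K n = h^n(1)`. -/
def Kword (n : ℕ) : List ℕ := happ^[n] [1]

namespace BAux

lemma happ_nil : happ [] = [] := rfl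

lemma happ_cons (a : ℕ) (u : List ℕ) : happ (a :: u) = hsub a ++ happ u := rfl

lemma happ_append (u v : List ℕ) : happ (u ++ v) = happ u ++ happ v :=
  List.flatMap_append

def Bin (u : List ℕ) : Prop := ∀ x ∈ u, x = 0 ∨ x = 1

lemma bin_happ (u : List ℕ) : Bin (happ u) := by
  intro x hx
  simp only [happ, List.mem_flatMap] at hx
  obtain ⟨a, -, hx⟩ := hx
  match a with
  | 0 => simp [hsub] at hx; omega
  | 1 => simp [hsub] at hx; omega
  | (n+2) => simp [hsub] at hx

lemma length_happ (u : List ℕ) (hu : Bin u) :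
    (happ u).length = 2 * u.length + u.count 1 := by
  induction u with
  | nil => rfl
  | cons a t ih =>
    have ht : Bin t := fun x hx => hu x (List.mem_cons_of_mem a hx)
    rcases hu a List.mem_cons_self with h | h <;>
      subst h <;>
      simp [happ_cons, hsub, ih ht, List.count_cons] <;> omega

lemma count1_happ (u : List ℕ) (hu : Bin u) :
    (happ u).count 1 = 2 * u.length := by
  induction u with
  | nil => rfl
  | cons a t ih =>
    have ht : Bin t := fun x hx => hu x (List.mem_cons_of_mem a hx)
    rcases hu a List.mem_cons_self with h | h <;>
      subst h <;>
      simp [happ_cons, hsub, ih ht, List.count_cons] <;> omega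

lemma count0_happ (u : List ℕ) (hu : Bin u) :
    (happ u).count 0 = u.count 1 := by
  induction u with
  | nil => rfl
  | cons a t ih =>
    have ht : Bin t := fun x hx => hu x (List.mem_cons_of_mem a hx)
    rcases hu a List.mem_cons_self with h | h <;>
      subst h <;>
      simp [happ_cons, hsub, ih ht, List.count_cons] <;> omega

lemma Kword_succ (m : ℕ) : Kword (m + 1) = happ (Kword m) := by
  simp [Kword, Function.iterate_succ_apply']

lemma bin_K (m : ℕ) : Bin (Kword m) := by
  cases m with
  | zero => intro x hx; simp [Kword] at hx; omega
  | succ m => rw [Kword_succ]; exact bin_happ _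

lemma len_K (m : ℕ) : m + 1 ≤ (Kword m).length := by
  induction m with
  | zero => simp [Kword]
  | succ m ih =>
    rw [Kword_succ, length_happ _ (bin_K m)]
    omega

lemma count1_K (m : ℕ) : 2 * (m + 1) ≤ (Kword (m + 1)).count 1 := by
  rw [Kword_succ, count1_happ _ (bin_K m)]
  have := len_K m
  omega

/-- existence of the n-th occurrence of `v` in a list. -/
lemma exists_nth_occ (v : ℕ) :
    ∀ (l : List ℕ) (n : ℕ), 1 ≤ n → n ≤ l.count v →
      ∃ A, 1 ≤ A ∧ A ≤ l.length ∧ l.getD (A - 1) 0 = v ∧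
        (l.take (A - 1)).count v = n - 1 := by
  intro l
  induction l with
  | nil => intro n h1 h2; simp at h2; omega
  | cons a t ih =>
    intro n h1 h2
    by_cases hav : a = v
    · subst hav
      rcases Nat.eq_or_lt_of_le h1 with h | h
      · exact ⟨1, le_refl 1, by simp, by simp, by simp [← h]⟩
      · have h2' : n - 1 ≤ t.count a := by
          rw [List.count_cons_self] at h2; omega
        obtain ⟨A', hA1, hA2, hA3, hA4⟩ := ih (n - 1) (by omega) h2'
        refine ⟨A' + 1, by omega, by simp; omega, ?_, ?_⟩
        · have he : A' + 1 - 1 = (A' - 1) + 1 := by omega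
          rw [he, List.getD_cons_succ]; exact hA3
        · have : (a :: t).take (A' + 1 - 1) = a :: t.take (A' - 1) := by
            have : A' + 1 - 1 = (A' - 1) + 1 := by omega
            rw [this, List.take_succ_cons]
          rw [this, List.count_cons_self, hA4]; omega
    · have hav' : v ≠ a := fun h => hav h.symm
      have h2' : n ≤ t.count v := by
        rw [List.count_cons_of_ne hav] at h2; exact h2
      obtain ⟨A', hA1, hA2, hA3, hA4⟩ := ih n h1 h2'
      refine ⟨A' + 1, by omega, by simp; omega, ?_, ?_⟩
      · have he : A' + 1 - 1 = (A' - 1) + 1 := by omega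
        rw [he, List.getD_cons_succ]; exact hA3
      · have : (a :: t).take (A' + 1 - 1) = a :: t.take (A' - 1) := by
          have : A' + 1 - 1 = (A' - 1) + 1 := by omega
          rw [this, List.take_succ_cons]
        rw [this, List.count_cons_of_ne hav, hA4]

/-- bridge between `Nat.count` on `k` and `List.count` on a prefix word. -/
lemma count_bridge (k : ℕ → ℕ) (w : List ℕ)
    (hk : ∀ i, i < w.length → k (i + 1) = w.getD i 0) (v : ℕ) :
    ∀ N, N ≤ w.length →
      Nat.count (fun i => 1 ≤ i ∧ k i = v) N.succ = (w.take N).count v := by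
  intro N
  induction N with
  | zero =>
    intro _
    rw [Nat.count_succ, Nat.count_zero]
    simp
  | succ N ih =>
    intro hN
    have hN' : N < w.length := by omega
    rw [Nat.count_succ, ih (by omega)]
    have htake : w.take (N + 1) = w.take N ++ [w.getD N 0] := by
      rw [List.take_succ]
      congr 1
      rw [List.getD_eq_getElem w 0 hN', List.getElem?_eq_getElem hN']
      rfl
    rw [htake, List.count_append]
    have hkN : k (N + 1) = w.getD N 0 := hk N hN'
    have hsing : List.count v [w.getD N 0] = if w.getD N 0 = v then 1 else 0 := by
      by_cases h : w.getD N 0 = v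
      · rw [h]; simp
      · rw [if_neg h, List.count_eq_zero]
        simp only [List.mem_singleton]
        exact fun hh => h hh.symm
    rw [hsing]
    by_cases hv : w.getD N 0 = v
    · rw [if_pos ⟨by omega, by rw [hkN]; exact hv⟩, if_pos hv]
    · rw [if_neg (by rintro ⟨-, h⟩; rw [hkN] at h; exact hv h), if_neg hv]

end BAux

open BAux

theorem B_eq_two_A_add_n
    (k : ℕ → ℕ)
    (hk : ∀ (m i : ℕ), i < (Kword m).length → k (i + 1) = (Kword m).getD i 0)
    (A B : ℕ → ℕ)
    (hA0 : A 0 = 0) (hB0 : B 0 = 0)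
    (hA : ∀ n : ℕ, 1 ≤ n → A n = Nat.nth (fun i => 1 ≤ i ∧ k i = 1) (n - 1))
    (hB : ∀ n : ℕ, 1 ≤ n → B n = Nat.nth (fun i => 1 ≤ i ∧ k i = 0) (n - 1)) :
    ∀ n : ℕ, 1 ≤ n → B n = 2 * A n + n := by
  intro n hn
  set m := n + 1 with hm
  set w := Kword m with hw
  have hbinw : Bin w := bin_K m
  have hcount : n ≤ w.count 1 := le_trans (by omega) (count1_K n)
  -- position of n-th `1` in w
  obtain ⟨a, ha1, ha2, ha3, ha4⟩ := exists_nth_occ 1 w n hn hcount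
  have hkw : ∀ i, i < w.length → k (i + 1) = w.getD i 0 := fun i hi => hk m i hi
  -- facts about a
  have hka : k a = 1 := by
    have := hkw (a - 1) (by omega)
    rwa [Nat.sub_add_cancel ha1, ha3] at this
  have hcnta : Nat.count (fun i => 1 ≤ i ∧ k i = 1) a = n - 1 := by
    have := count_bridge k w hkw 1 (a - 1) (by omega)
    rwa [Nat.succ_eq_add_one, Nat.sub_add_cancel ha1, ha4] at this
  have hAn : A n = a := by
    rw [hA n hn, ← hcnta]
    exact Nat.nth_count ⟨ha1, hka⟩
  -- the image word
  set W := Kword (m + 1) with hW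
  have hWhapp : W = happ w := Kword_succ m
  have hkW : ∀ i, i < W.length → k (i + 1) = W.getD i 0 := fun i hi => hk (m + 1) i hi
  -- decompose w.take a
  set u' := w.take (a - 1) with hu'
  have hbinu' : Bin u' := fun x hx => hbinw x (List.mem_of_mem_take hx)
  have hsplit : w.take a = u' ++ [1] := by
    have h1 : a = (a - 1) + 1 := by omega
    rw [h1, List.take_succ, ← hu']
    congr 1
    have hlt : a - 1 < w.length := by omega
    rw [List.getElem?_eq_getElem hlt]
    have := ha3
    rw [List.getD_eq_getElem w 0 hlt] at this
    rw [this]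
    rfl
  have hcu' : u'.count 1 = n - 1 := ha4
  set b := 2 * a + n with hb
  have hlenu' : (happ u').length = 2 * (a - 1) + (n - 1) := by
    have hlu : u'.length = a - 1 := by
      rw [hu', List.length_take]; omega
    rw [length_happ _ hbinu', hcu', hlu]
  have hWsplit : W = happ u' ++ ([1, 1, 0] ++ happ (w.drop a)) := by
    have h0 : happ w = happ (w.take a ++ w.drop a) := by rw [List.take_append_drop]
    rw [hWhapp, h0, happ_append, hsplit, happ_append]
    simp [happ_cons, hsub, happ_nil]
  have hlen3 : (happ u').length = b - 3 := by omega
  -- k b = 0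
  have hWlen : W.length = (happ u').length + 3 + (happ (w.drop a)).length := by
    rw [hWsplit]; simp; omega
  have hblen : b ≤ W.length := by omega
  have hkb : k b = 0 := by
    have hb1 : 1 ≤ b := by omega
    have := hkW (b - 1) (by omega)
    rw [Nat.sub_add_cancel hb1] at this
    rw [this, hWsplit]
    rw [List.getD_append_right _ _ _ _ (by omega)]
    rw [List.getD_append _ _ _ _ (by simp; omega)]
    have h2 : b - 1 - (happ u').length = 2 := by omega
    rw [h2]
    rfl
  have hcntb : Nat.count (fun i => 1 ≤ i ∧ k i = 0) b = n - 1 := by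
    have hbr := count_bridge k W hkW 0 (b - 1) (by omega)
    rw [Nat.succ_eq_add_one, Nat.sub_add_cancel (by omega)] at hbr
    rw [hbr]
    have htk : W.take (b - 1) = happ u' ++ [1, 1] := by
      rw [hWsplit]
      have h2 : b - 1 = (happ u').length + 2 := by omega
      rw [h2, List.take_append]
      rw [List.take_of_length_le (by omega), Nat.add_sub_cancel_left]
      rfl
    rw [htk, List.count_append, count0_happ _ hbinu', hcu']
    simp
  have hBn : B n = b := by
    rw [hB n hn, ← hcntb]
    exact Nat.nth_count ⟨by omega, hkb⟩
  rw [hBn, hAn, hb]
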